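/- Let α, T_p, Δ, diam ≥ 0 with T_p > 0 and γ ≥ 1. The function φ(λ, β) = max{βγ - β, 1 - λ, λ - β, (-2β + λ - 1)/γ + λ, λ - λ/γ} over (λ, β) ≥ 0 attains its minimum value (γ-1)/(2γ-1) at λ* = γ/(2γ-1), β* = 1/(2γ-1). -/

import Mathlib

/-- Exponent trade-off optimization for the regret bound: for `γ ≥ 1`, the function
`φ(λ, β) = max{βγ - β, 1 - λ, λ - β, (-2β + λ - 1)/γ + λ, λ - λ/γ}` over
`(λ, β) ≥ 0` attains its minimum value `(γ-1)/(2γ-1)` at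
`λ* = γ/(2γ-1)`, `β* = 1/(2γ-1)`. -/
theorem exponent_tradeoff_optimum
    (γ : ℝ) (hγ : 1 ≤ γ)
    (φ : ℝ → ℝ → ℝ)
    (hφ : ∀ lam β, φ lam β =
      max (β * γ - β) (max (1 - lam) (max (lam - β)
        (max ((-2 * β + lam - 1) / γ + lam) (lam - lam / γ))))) :
    φ (γ / (2 * γ - 1)) (1 / (2 * γ - 1)) = (γ - 1) / (2 * γ - 1) ∧
    ∀ lam β : ℝ, 0 ≤ lam → 0 ≤ β → (γ - 1) / (2 * γ - 1) ≤ φ lam β := by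
  have hD : (0:ℝ) < 2 * γ - 1 := by linarith
  have hg : (0:ℝ) < γ := by linarith
  constructor
  · rw [hφ]
    have e1 : (1 / (2 * γ - 1)) * γ - 1 / (2 * γ - 1) = (γ - 1) / (2 * γ - 1) := by
      field_simp
    have e2 : 1 - γ / (2 * γ - 1) = (γ - 1) / (2 * γ - 1) := by
      rw [eq_div_iff hD.ne', sub_mul, div_mul_cancel₀ _ hD.ne']; ring
    have e3 : γ / (2 * γ - 1) - 1 / (2 * γ - 1) = (γ - 1) / (2 * γ - 1) := by
      rw [div_sub_div_same]
    have e5 : γ / (2 * γ - 1) - γ / (2 * γ - 1) / γ = (γ - 1) / (2 * γ - 1) := by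
      field_simp
    have e4 : (-2 * (1 / (2 * γ - 1)) + γ / (2 * γ - 1) - 1) / γ + γ / (2 * γ - 1)
        ≤ (γ - 1) / (2 * γ - 1) := by
      have h : -2 * (1 / (2 * γ - 1)) + γ / (2 * γ - 1) - 1 = (-γ - 1) / (2 * γ - 1) := by
        field_simp; ring
      rw [h, div_div, div_add_div _ _ (by positivity) hD.ne', div_le_div_iff₀ (by positivity) hD]
      nlinarith
    rw [e1, e2, e3, e5]
    rw [max_eq_right e4, max_self, max_self, max_self]
  · intro lam β hl hb
    rw [hφ]
    set M := max (β * γ - β) (max (1 - lam) (max (lam - β)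
        (max ((-2 * β + lam - 1) / γ + lam) (lam - lam / γ)))) with hM
    have h1 : β * γ - β ≤ M := le_max_left _ _
    have h2 : 1 - lam ≤ M := le_trans (le_max_left _ _) (le_max_right _ _)
    have h3 : lam - β ≤ M :=
      le_trans (le_trans (le_max_left _ _) (le_max_right _ _)) (le_max_right _ _)
    rw [div_le_iff₀ hD]
    nlinarith
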